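/- (Isomorphism Theorem.) Let Q : ℝ[X] → ℝ[X] be a shift-invariant ℝ-linear operator with basic sequence p : ℕ → ℝ[X] (deg(p n) = n, p 0 = 1, (p n).eval(0) = 0 for n ≥ 1, Q(p 0) = 0, Q(p (n+1)) = p n). Then the map Φ sending a shift-invariant ℝ-linear operator S to the formal power series Φ(S) = ∑_{k≥0} ((S (p k)).eval(0))·tᵏ ∈ PowerSeries ℝ is a bijection from the set of shift-invariant ℝ-linear endomorphisms of ℝ[X] onto PowerSeries ℝ, and it is an algebra isomorphism: Φ(S + T) = Φ(S) + Φ(T), Φ(c • S) = c·Φ(S), Φ(S ∘ T) = Φ(S)·Φ(T), and Φ(id) = 1. -/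

import Mathlib

open Polynomial

/-- A linear operator on `ℝ[X]` is shift invariant if it commutes with all shifts
`f(x) ↦ f(x + a)`. -/
def ShiftInvariant (S : Module.End ℝ ℝ[X]) : Prop :=
  ∀ (a : ℝ) (f : ℝ[X]), S (f.comp (X + C a)) = (S f).comp (X + C a)

section Aux

variable (Q : Module.End ℝ ℝ[X]) (p : ℕ → ℝ[X])

lemma shiftInv_pow {Q} (hQ : ShiftInvariant Q) (k : ℕ) : ShiftInvariant (Q ^ k) := by
  induction k with
  | zero => intro a f; simp
  | succ k ih =>
    intro a f
    rw [pow_succ, Module.End.mul_apply, Module.End.mul_apply, hQ, ih]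

lemma span_aux (hdeg : ∀ n : ℕ, (p n).degree = n) :
    ∀ (n : ℕ) (f : ℝ[X]), f.degree < (n : WithBot ℕ) → f ∈ Submodule.span ℝ (Set.range p) := by
  intro n
  induction n with
  | zero =>
    intro f hf
    have : f = 0 := by
      rwa [Nat.cast_zero, Nat.WithBot.lt_zero_iff, degree_eq_bot] at hf
    simp [this]
  | succ n ih =>
    intro f hf
    set c : ℝ := f.coeff n / (p n).coeff n with hc
    have hpn : (p n).coeff n ≠ 0 := coeff_ne_zero_of_eq_degree (hdeg n)
    have hg : (f - c • p n).degree < (n : WithBot ℕ) := by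
      rw [degree_lt_iff_coeff_zero]
      intro m hm
      rcases eq_or_lt_of_le hm with h | h
      · simp only [coeff_sub, coeff_smul, ← h, smul_eq_mul, hc]
        field_simp
        ring
      · have h1 : f.coeff m = 0 :=
          coeff_eq_zero_of_degree_lt (lt_of_lt_of_le hf (by exact_mod_cast h))
        have h2 : (p n).coeff m = 0 := coeff_eq_zero_of_degree_lt
          (by rw [hdeg n]; exact_mod_cast h)
        simp [h1, h2]
    have := ih _ hg
    have h2 : c • p n ∈ Submodule.span ℝ (Set.range p) :=
      Submodule.smul_mem _ _ (Submodule.subset_span ⟨n, rfl⟩)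
    have := Submodule.add_mem _ this h2
    simpa using this

lemma span_top (hdeg : ∀ n : ℕ, (p n).degree = n) (f : ℝ[X]) :
    f ∈ Submodule.span ℝ (Set.range p) :=
  span_aux p hdeg (f.natDegree + 1) f
    (lt_of_le_of_lt degree_le_natDegree (by exact_mod_cast Nat.lt_succ_self _))

lemma Qpow_basic (hQs : ∀ n : ℕ, Q (p (n + 1)) = p n) :
    ∀ (k n : ℕ), (Q ^ k) (p (n + k)) = p n := by
  intro k
  induction k with
  | zero => intro n; simp
  | succ k ih =>
    intro n
    rw [pow_succ', Module.End.mul_apply]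
    have : n + (k + 1) = (n + 1) + k := by ring
    rw [this, ih (n + 1), hQs]

lemma Qpow_zero (hdeg : ∀ n : ℕ, (p n).degree = n)
    (hQ0 : Q (p 0) = 0) (hQs : ∀ n : ℕ, Q (p (n + 1)) = p n) :
    ∀ (n : ℕ) (f : ℝ[X]), f.degree < (n : WithBot ℕ) → (Q ^ n) f = 0 := by
  intro n
  induction n with
  | zero =>
    intro f hf
    have : f = 0 := by
      rwa [Nat.cast_zero, Nat.WithBot.lt_zero_iff, degree_eq_bot] at hf
    simp [this]
  | succ n ih =>
    intro f hf
    set c : ℝ := f.coeff n / (p n).coeff n with hc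
    have hpn : (p n).coeff n ≠ 0 := coeff_ne_zero_of_eq_degree (hdeg n)
    have hg : (f - c • p n).degree < (n : WithBot ℕ) := by
      rw [degree_lt_iff_coeff_zero]
      intro m hm
      rcases eq_or_lt_of_le hm with h | h
      · simp only [coeff_sub, coeff_smul, ← h, smul_eq_mul, hc]
        field_simp
        ring
      · have h1 : f.coeff m = 0 :=
          coeff_eq_zero_of_degree_lt (lt_of_lt_of_le hf (by exact_mod_cast h))
        have h2 : (p n).coeff m = 0 := coeff_eq_zero_of_degree_lt
          (by rw [hdeg n]; exact_mod_cast h)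
        simp [h1, h2]
    have h1 : (Q ^ (n + 1)) (f - c • p n) = 0 := by
      rw [pow_succ', Module.End.mul_apply, ih _ hg, map_zero]
    have h2 : (Q ^ (n + 1)) (p n) = 0 := by
      rw [pow_succ', Module.End.mul_apply]
      have := Qpow_basic Q p hQs n 0
      rw [zero_add] at this
      rw [this, hQ0]
    have : (Q ^ (n + 1)) f = (Q ^ (n + 1)) (f - c • p n) + c • (Q ^ (n + 1)) (p n) := by
      rw [← map_smul, ← map_add]; congr 1; ring
    rw [this, h1, h2, smul_zero, add_zero]

/-- Key injectivity lemma. -/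
lemma inj_zero (p : ℕ → ℝ[X]) (hdeg : ∀ n : ℕ, (p n).degree = n)
    {S : Module.End ℝ ℝ[X]} (hS : ShiftInvariant S)
    (h : ∀ k, (S (p k)).eval 0 = 0) : S = 0 := by
  have h0 : ∀ f : ℝ[X], (S f).eval 0 = 0 := by
    have hsub : Set.range p ⊆
        ↑(LinearMap.ker ((Polynomial.leval (0:ℝ)) ∘ₗ S)) := by
      rintro _ ⟨k, rfl⟩
      simp only [SetLike.mem_coe, LinearMap.mem_ker, LinearMap.comp_apply, leval_apply]
      exact h k
    have hker := Submodule.span_le.mpr hsub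
    intro f
    have := hker (span_top p hdeg f)
    simpa only [LinearMap.mem_ker, LinearMap.comp_apply, leval_apply] using this
  refine LinearMap.ext fun f => ?_
  rw [LinearMap.zero_apply]
  refine Polynomial.funext fun a => ?_
  have h1 : (S f).eval a = ((S f).comp (X + C a)).eval 0 := by
    rw [eval_comp]; simp
  rw [h1, ← hS a f, h0, eval_zero]



lemma sum_stable (hdeg : ∀ n : ℕ, (p n).degree = n)
    (hQ0 : Q (p 0) = 0) (hQs : ∀ n : ℕ, Q (p (n + 1)) = p n)
    (c : ℕ → ℝ) (f : ℝ[X]) (N : ℕ) (hN : f.natDegree < N) :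
    ∑ k ∈ Finset.range (f.natDegree + 1), c k • ((Q ^ k) f)
      = ∑ k ∈ Finset.range N, c k • ((Q ^ k) f) := by
  refine Finset.sum_subset (Finset.range_subset_range.mpr hN) ?_
  intro k _ hk
  rw [Finset.mem_range, not_lt] at hk
  have hdf : f.degree < (k : WithBot ℕ) := by
    refine lt_of_le_of_lt degree_le_natDegree ?_
    exact_mod_cast hk
  rw [Qpow_zero Q p hdeg hQ0 hQs k f hdf, smul_zero]

noncomputable def opOf (hdeg : ∀ n : ℕ, (p n).degree = n)
    (hQ0 : Q (p 0) = 0) (hQs : ∀ n : ℕ, Q (p (n + 1)) = p n)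
    (F : PowerSeries ℝ) : Module.End ℝ ℝ[X] where
  toFun f := ∑ k ∈ Finset.range (f.natDegree + 1), (PowerSeries.coeff k F) • ((Q ^ k) f)
  map_add' f g := by
    rw [sum_stable Q p hdeg hQ0 hQs _ (f + g) (max f.natDegree g.natDegree + 1)
        (Nat.lt_succ_of_le (natDegree_add_le f g)),
      sum_stable Q p hdeg hQ0 hQs _ f (max f.natDegree g.natDegree + 1)
        (Nat.lt_succ_of_le (le_max_left _ _)),
      sum_stable Q p hdeg hQ0 hQs _ g (max f.natDegree g.natDegree + 1)
        (Nat.lt_succ_of_le (le_max_right _ _)),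
      ← Finset.sum_add_distrib]
    refine Finset.sum_congr rfl fun k _ => ?_
    rw [map_add, smul_add]
  map_smul' r f := by
    rw [RingHom.id_apply]
    rw [sum_stable Q p hdeg hQ0 hQs _ (r • f) (f.natDegree + 1)
        (Nat.lt_succ_of_le (natDegree_smul_le r f)),
      Finset.smul_sum]
    refine Finset.sum_congr rfl fun k _ => ?_
    rw [map_smul, smul_comm]

lemma opOf_apply (hdeg : ∀ n : ℕ, (p n).degree = n)
    (hQ0 : Q (p 0) = 0) (hQs : ∀ n : ℕ, Q (p (n + 1)) = p n)
    (F : PowerSeries ℝ) (f : ℝ[X]) (N : ℕ) (hN : f.natDegree < N) :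
    opOf Q p hdeg hQ0 hQs F f
      = ∑ k ∈ Finset.range N, (PowerSeries.coeff k F) • ((Q ^ k) f) := by
  rw [opOf]
  simp only [LinearMap.coe_mk, AddHom.coe_mk]
  exact sum_stable Q p hdeg hQ0 hQs _ f N hN

lemma opOf_shiftInv (hQshift : ShiftInvariant Q) (hdeg : ∀ n : ℕ, (p n).degree = n)
    (hQ0 : Q (p 0) = 0) (hQs : ∀ n : ℕ, Q (p (n + 1)) = p n)
    (F : PowerSeries ℝ) : ShiftInvariant (opOf Q p hdeg hQ0 hQs F) := by
  intro a f
  have hcomp : (f.comp (X + C a)).natDegree = f.natDegree := by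
    rw [natDegree_comp, natDegree_X_add_C, mul_one]
  rw [opOf_apply Q p hdeg hQ0 hQs F (f.comp (X + C a)) (f.natDegree + 1)
      (by omega),
    opOf_apply Q p hdeg hQ0 hQs F f (f.natDegree + 1) (by omega),
    Polynomial.sum_comp]
  refine Finset.sum_congr rfl fun k _ => ?_
  rw [shiftInv_pow hQshift k a f, Polynomial.smul_comp]

lemma opOf_apply_p (hdeg : ∀ n : ℕ, (p n).degree = n)
    (hQ0 : Q (p 0) = 0) (hQs : ∀ n : ℕ, Q (p (n + 1)) = p n)
    (F : PowerSeries ℝ) (n : ℕ) :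
    opOf Q p hdeg hQ0 hQs F (p n)
      = ∑ k ∈ Finset.range (n + 1), (PowerSeries.coeff k F) • p (n - k) := by
  have hnd : (p n).natDegree = n := natDegree_eq_of_degree_eq_some (hdeg n)
  rw [opOf_apply Q p hdeg hQ0 hQs F (p n) (n + 1) (by omega)]
  refine Finset.sum_congr rfl fun k hk => ?_
  rw [Finset.mem_range] at hk
  have : (Q ^ k) (p n) = p (n - k) := by
    have := Qpow_basic Q p hQs k (n - k)
    rwa [Nat.sub_add_cancel (by omega)] at this
  rw [this]

lemma opOf_eval (hdeg : ∀ n : ℕ, (p n).degree = n) (hp0 : p 0 = 1)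
    (hpeval : ∀ n : ℕ, 1 ≤ n → (p n).eval 0 = 0)
    (hQ0 : Q (p 0) = 0) (hQs : ∀ n : ℕ, Q (p (n + 1)) = p n)
    (F : PowerSeries ℝ) (n : ℕ) :
    (opOf Q p hdeg hQ0 hQs F (p n)).eval 0 = PowerSeries.coeff n F := by
  rw [opOf_apply_p Q p hdeg hQ0 hQs F n, eval_finset_sum]
  rw [Finset.sum_eq_single n]
  · simp [hp0]
  · intro k hk hkn
    rw [Finset.mem_range] at hk
    have : 1 ≤ n - k := by omega
    rw [eval_smul, hpeval _ this, smul_zero]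
  · intro h
    exact absurd (Finset.self_mem_range_succ n) h

lemma shiftInv_sub {S T : Module.End ℝ ℝ[X]} (hS : ShiftInvariant S)
    (hT : ShiftInvariant T) : ShiftInvariant (S - T) := by
  intro a f
  rw [LinearMap.sub_apply, LinearMap.sub_apply, hS, hT, sub_comp]

lemma expand (hQshift : ShiftInvariant Q) (hdeg : ∀ n : ℕ, (p n).degree = n)
    (hp0 : p 0 = 1) (hpeval : ∀ n : ℕ, 1 ≤ n → (p n).eval 0 = 0)
    (hQ0 : Q (p 0) = 0) (hQs : ∀ n : ℕ, Q (p (n + 1)) = p n)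
    {S : Module.End ℝ ℝ[X]} (hS : ShiftInvariant S) :
    S = opOf Q p hdeg hQ0 hQs (PowerSeries.mk fun k => (S (p k)).eval 0) := by
  rw [← sub_eq_zero]
  refine inj_zero p hdeg (shiftInv_sub hS (opOf_shiftInv Q p hQshift hdeg hQ0 hQs _)) ?_
  intro k
  rw [LinearMap.sub_apply, eval_sub,
    opOf_eval Q p hdeg hp0 hpeval hQ0 hQs _ k, PowerSeries.coeff_mk, sub_self]

end Aux

/-- Isomorphism Theorem: given a shift-invariant delta operator `Q` with basic sequence `p`,
the map `Φ(S) = ∑_k ((S (p k)).eval 0) tᵏ` is a bijection from the shift-invariant linear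
operators on `ℝ[X]` onto the algebra of formal power series, and it is an algebra
isomorphism: it is additive, homogeneous, multiplicative (sending composition to the
product of power series), and sends the identity operator to `1`. -/
theorem isomorphism_theorem
    (Q : Module.End ℝ ℝ[X])
    (hQshift : ShiftInvariant Q)
    (p : ℕ → ℝ[X])
    (hdeg : ∀ n : ℕ, (p n).degree = n)
    (hp0 : p 0 = 1)
    (hpeval : ∀ n : ℕ, 1 ≤ n → (p n).eval 0 = 0)
    (hQ0 : Q (p 0) = 0)
    (hQs : ∀ n : ℕ, Q (p (n + 1)) = p n)
    (Φ : Module.End ℝ ℝ[X] → PowerSeries ℝ)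
    (hΦ : ∀ S : Module.End ℝ ℝ[X],
      Φ S = PowerSeries.mk fun k => (S (p k)).eval 0) :
    (∀ S T : Module.End ℝ ℝ[X],
        ShiftInvariant S → ShiftInvariant T → Φ S = Φ T → S = T) ∧
    (∀ F : PowerSeries ℝ, ∃ S : Module.End ℝ ℝ[X], ShiftInvariant S ∧ Φ S = F) ∧
    (∀ S T : Module.End ℝ ℝ[X],
        ShiftInvariant S → ShiftInvariant T → Φ (S + T) = Φ S + Φ T) ∧
    (∀ (c : ℝ) (S : Module.End ℝ ℝ[X]),
        ShiftInvariant S → Φ (c • S) = (PowerSeries.C (R := ℝ) c) * Φ S) ∧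
    (∀ S T : Module.End ℝ ℝ[X],
        ShiftInvariant S → ShiftInvariant T → Φ (S ∘ₗ T) = Φ S * Φ T) ∧
    Φ (LinearMap.id : Module.End ℝ ℝ[X]) = 1 := by
  refine ⟨?_, ?_, ?_, ?_, ?_, ?_⟩
  · -- injectivity
    intro S T hS hT hST
    rw [← sub_eq_zero]
    refine inj_zero p hdeg (shiftInv_sub hS hT) ?_
    intro k
    have hk := congrArg (PowerSeries.coeff k) hST
    rw [hΦ S, hΦ T, PowerSeries.coeff_mk, PowerSeries.coeff_mk] at hk
    rw [LinearMap.sub_apply, eval_sub, hk, sub_self]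
  · -- surjectivity
    intro F
    refine ⟨opOf Q p hdeg hQ0 hQs F, opOf_shiftInv Q p hQshift hdeg hQ0 hQs F, ?_⟩
    rw [hΦ]
    ext n
    rw [PowerSeries.coeff_mk, opOf_eval Q p hdeg hp0 hpeval hQ0 hQs]
  · -- additivity
    intro S T _ _
    ext k
    rw [hΦ, hΦ, hΦ, map_add, PowerSeries.coeff_mk, PowerSeries.coeff_mk,
      PowerSeries.coeff_mk, LinearMap.add_apply, eval_add]
  · -- smul
    intro c S _
    ext k
    rw [hΦ, hΦ, PowerSeries.coeff_C_mul, PowerSeries.coeff_mk, PowerSeries.coeff_mk,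
      LinearMap.smul_apply, eval_smul, smul_eq_mul]
  · -- multiplicativity
    intro S T hS hT
    ext n
    have hT' := expand Q p hQshift hdeg hp0 hpeval hQ0 hQs hT
    have hTp : T (p n) = ∑ k ∈ Finset.range (n + 1), ((T (p k)).eval 0) • p (n - k) := by
      conv_lhs => rw [hT']
      rw [opOf_apply_p]
      refine Finset.sum_congr rfl fun k _ => ?_
      rw [PowerSeries.coeff_mk]
    rw [hΦ (S ∘ₗ T), PowerSeries.coeff_mk, LinearMap.comp_apply, hTp, map_sum,
      eval_finset_sum, hΦ S, hΦ T, mul_comm, PowerSeries.coeff_mul,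
      Finset.Nat.sum_antidiagonal_eq_sum_range_succ_mk]
    refine Finset.sum_congr rfl fun k _ => ?_
    rw [map_smul, eval_smul, PowerSeries.coeff_mk, PowerSeries.coeff_mk, smul_eq_mul]
  · -- identity
    rw [hΦ]
    ext k
    rw [PowerSeries.coeff_mk, LinearMap.id_apply, PowerSeries.coeff_one]
    cases k with
    | zero => simp [hp0]
    | succ k => simp [hpeval (k + 1) (by omega)]
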